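/- For every S₀ ∈ ℝ, the characteristic polynomial of the matrix L₀(S₀) factors as (X − λ₁(S₀)) · (X − λ₂(S₀)) · (X + γ)^{N−1}. In particular L₀(S₀) has N + 1 real eigenvalues: λ₁(S₀), λ₂(S₀), and −γ with multiplicity N − 1. -/

import Mathlib

open Polynomial

private noncomputable def arrM (N : ℕ) (a d : ℝ) (u v : Fin N → ℝ) :
    Matrix (Fin (N + 1)) (Fin (N + 1)) ℝ :=
  Matrix.of fun i j =>
    Fin.cases (Fin.cases a u j)
      (fun k => Fin.cases (v k) (fun l => if k = l then d else 0) j) i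

private noncomputable def arrB (N : ℕ) (d : ℝ) (u : Fin N → ℝ) :
    Matrix (Fin (N + 1)) (Fin (N + 1)) ℝ :=
  Matrix.of fun i j =>
    Fin.cases (Fin.cases 1 (fun l => u l / d) j)
      (fun k => Fin.cases 0 (fun l => if k = l then (1 : ℝ) else 0) j) i

private noncomputable def arrC (N : ℕ) (a d : ℝ) (u v : Fin N → ℝ) :
    Matrix (Fin (N + 1)) (Fin (N + 1)) ℝ :=
  Matrix.of fun i j =>
    Fin.cases (Fin.cases (a - (∑ k, u k * v k) / d) (fun _ => (0 : ℝ)) j)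
      (fun k => Fin.cases (v k) (fun l => if k = l then d else 0) j) i

private lemma arr_fact (N : ℕ) (a d : ℝ) (u v : Fin N → ℝ) (hd : d ≠ 0) :
    arrM N a d u v = arrB N d u * arrC N a d u v := by
  ext i j
  rw [Matrix.mul_apply, Fin.sum_univ_succ]
  induction i using Fin.cases with
  | zero =>
    induction j using Fin.cases with
    | zero =>
      simp only [arrM, arrB, arrC, Matrix.of_apply, Fin.cases_zero, Fin.cases_succ]
      have h1 : ∑ k, u k / d * v k = (∑ k, u k * v k) / d := by
        rw [Finset.sum_div]
        exact Finset.sum_congr rfl fun k _ => by ring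
      rw [h1]
      field_simp
      ring
    | succ l =>
      simp only [arrM, arrB, arrC, Matrix.of_apply, Fin.cases_zero, Fin.cases_succ,
        mul_ite, mul_zero, mul_one, Finset.sum_ite_eq, Finset.mem_univ, if_true,
        one_mul, zero_add]
      field_simp
      simp [Finset.sum_ite_eq']
  | succ k =>
    induction j using Fin.cases with
    | zero =>
      simp [arrM, arrB, arrC, ite_mul, Finset.sum_ite_eq]
    | succ l =>
      simp [arrM, arrB, arrC, ite_mul, Finset.sum_ite_eq]

private lemma arr_det (N : ℕ) (a d : ℝ) (u v : Fin N → ℝ) (hd : d ≠ 0) :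
    (arrM N a d u v).det = (a - (∑ k, u k * v k) / d) * d ^ N := by
  rw [arr_fact N a d u v hd, Matrix.det_mul]
  have hB : (arrB N d u).BlockTriangular id := by
    intro i j hij
    induction i using Fin.cases with
    | zero => exact absurd hij (Fin.not_lt_zero _).elim
    | succ k =>
      induction j using Fin.cases with
      | zero => simp [arrB]
      | succ l =>
        have : ¬ (k = l) := by
          intro h; subst h; exact lt_irrefl _ hij
        simp [arrB, this]
  have hC : (arrC N a d u v).BlockTriangular OrderDual.toDual := by
    intro i j hij
    have hij' : i < j := hij
    induction j using Fin.cases with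
    | zero => exact absurd hij' (Fin.not_lt_zero _).elim
    | succ l =>
      induction i using Fin.cases with
      | zero => simp [arrC]
      | succ k =>
        have : ¬ (k = l) := by
          intro h; subst h; exact lt_irrefl _ hij'
        simp [arrC, this]
  rw [Matrix.det_of_upperTriangular hB, Matrix.det_of_lowerTriangular _ hC]
  rw [Fin.prod_univ_succ, Fin.prod_univ_succ]
  simp [arrB, arrC]


/-- The `(N+1) × (N+1)` matrix `L₀(S₀)` of the frozen linearization: first row
`(−σ, β₁S₀, …, β_N S₀)`, first column `(−σ, x₁σ, …, x_N σ)ᵗ`, remaining diagonal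
entries `−γ`, all other entries `0`. -/
noncomputable def L0 (N : ℕ) (σ γ : ℝ) (β x : Fin N → ℝ) (S : ℝ) :
    Matrix (Fin (N + 1)) (Fin (N + 1)) ℝ :=
  Matrix.of fun i j =>
    Fin.cases
      (Fin.cases (-σ) (fun k => β k * S) j)
      (fun k => Fin.cases (x k * σ) (fun l => if k = l then -γ else 0) j)
      i

/-- for `S₀ ≥ 0` the characteristic polynomial of `L₀(S₀)` factors as
`(X − λ₁(S₀)) (X − λ₂(S₀)) (X + γ)^(N−1)`; in particular `L₀(S₀)` has the `N + 1`
real eigenvalues `λ₁(S₀)`, `λ₂(S₀)` and `−γ` (the latter with multiplicity `N − 1`). -/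
theorem stmt_3
    (N : ℕ) [NeZero N]
    (σ : ℝ) (hσ : 0 < σ)
    (γ β x : Fin N → ℝ)
    (hγ : ∀ i, 0 < γ i) (hβ : ∀ i, 0 < β i) (hx : ∀ i, 0 < x i)
    (hxsum : ∑ i, x i = 1)
    (γmin : ℝ) (hγmin : γmin = Finset.univ.inf' Finset.univ_nonempty γ)
    (lam1 lam2 : ℝ → ℝ)
    (hlam1 : ∀ S₀, lam1 S₀ = -(σ + γmin) / 2
      + (1 / 2) * Real.sqrt (4 * σ * (∑ i, β i * x i) * S₀ + (γmin - σ) ^ 2))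
    (hlam2 : ∀ S₀, lam2 S₀ = -(σ + γmin) / 2
      - (1 / 2) * Real.sqrt (4 * σ * (∑ i, β i * x i) * S₀ + (γmin - σ) ^ 2))
    (S₀ : ℝ) (hS₀ : 0 ≤ S₀) :
    (L0 N σ γmin β x S₀).charpoly
      = (X - C (lam1 S₀)) * (X - C (lam2 S₀)) * (X + C γmin) ^ (N - 1) := by
  have hb0 : (0 : ℝ) ≤ ∑ i, β i * x i :=
    Finset.sum_nonneg fun i _ => (mul_pos (hβ i) (hx i)).le
  have hD : 0 ≤ 4 * σ * (∑ i, β i * x i) * S₀ + (γmin - σ) ^ 2 := by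
    have h1 : 0 ≤ 4 * σ * (∑ i, β i * x i) * S₀ :=
      mul_nonneg (mul_nonneg (by linarith) hb0) hS₀
    nlinarith [sq_nonneg (γmin - σ)]
  have hsq := Real.sq_sqrt hD
  apply Polynomial.eq_of_infinite_eval_eq
  have hinf : ({-γmin}ᶜ : Set ℝ).Infinite := (Set.finite_singleton _).infinite_compl
  refine hinf.mono fun t ht => ?_
  simp only [Set.mem_compl_iff, Set.mem_singleton_iff] at ht
  have htγ : t + γmin ≠ 0 := fun h => ht (by linarith)
  simp only [Set.mem_setOf_eq]
  have hchar : eval t (L0 N σ γmin β x S₀).charpoly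
      = (arrM N (t + σ) (t + γmin) (fun l => -(β l * S₀)) (fun k => -(x k * σ))).det := by
    have h1 : eval t (L0 N σ γmin β x S₀).charpoly
        = (((L0 N σ γmin β x S₀).charmatrix).map (Polynomial.evalRingHom t)).det :=
      RingHom.map_det (Polynomial.evalRingHom t) _
    rw [h1]
    congr 1
    ext i j
    rw [Matrix.map_apply]
    by_cases h : i = j
    · subst h
      rw [Matrix.charmatrix_apply_eq]
      induction i using Fin.cases with
      | zero => simp [L0, arrM]
      | succ k => simp [L0, arrM]
    · rw [Matrix.charmatrix_apply_ne _ _ _ h]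
      induction i using Fin.cases with
      | zero =>
        induction j using Fin.cases with
        | zero => exact absurd rfl h
        | succ l => simp [L0, arrM]
      | succ k =>
        induction j using Fin.cases with
        | zero => simp [L0, arrM]
        | succ l =>
          have hkl : ¬ (k = l) := fun hh => h (by rw [hh])
          simp [L0, arrM, hkl]
  rw [hchar, arr_det _ _ _ _ _ htγ]
  have hs : (∑ k, -(β k * S₀) * -(x k * σ)) = σ * S₀ * ∑ i, β i * x i := by
    rw [Finset.mul_sum]
    exact Finset.sum_congr rfl fun k _ => by ring
  rw [hs]
  simp only [eval_mul, eval_pow, eval_sub, eval_add, eval_X, eval_C]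
  rw [hlam1 S₀, hlam2 S₀]
  obtain ⟨m, rfl⟩ := Nat.exists_eq_succ_of_ne_zero (NeZero.ne N)
  simp only [Nat.succ_sub_one]
  set r := Real.sqrt (4 * σ * (∑ i, β i * x i) * S₀ + (γmin - σ) ^ 2) with hr
  have key : (t + σ - σ * S₀ * (∑ i, β i * x i) / (t + γmin)) * (t + γmin)
      = (t - (-(σ + γmin) / 2 + 1 / 2 * r)) * (t - (-(σ + γmin) / 2 - 1 / 2 * r)) := by
    have expand : (t + σ - σ * S₀ * (∑ i, β i * x i) / (t + γmin)) * (t + γmin)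
        = (t + σ) * (t + γmin) - σ * S₀ * (∑ i, β i * x i) := by
      field_simp
    rw [expand]
    linear_combination (1 / 4 : ℝ) * hsq
  calc (t + σ - σ * S₀ * (∑ i, β i * x i) / (t + γmin)) * (t + γmin) ^ (m + 1)
      = ((t + σ - σ * S₀ * (∑ i, β i * x i) / (t + γmin)) * (t + γmin)) * (t + γmin) ^ m := by
        ring
    _ = _ := by rw [key]
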